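/- (Kővári–Sós–Turán) For fixed integers s, t >= 2, there is a constant c such that every K_{s,t}-free simple graph on n vertices has at most c * n^(2 - 1/t) edges. -/

import Mathlib

open Finset

theorem kovari_sos_turan (s t : ℕ) (hs : 2 ≤ s) (ht : 2 ≤ t) :
    ∃ c : ℝ, ∀ (V : Type) [Fintype V] [DecidableEq V]
      (G : SimpleGraph V) [DecidableRel G.Adj],
      (¬ ∃ A B : Finset V, A.card = s ∧ B.card = t ∧ Disjoint A B ∧
        ∀ a ∈ A, ∀ b ∈ B, G.Adj a b) →
      (G.edgeFinset.card : ℝ) ≤ c * (Fintype.card V : ℝ) ^ (2 - 1 / (t : ℝ)) := by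
  have ht0 : (0:ℝ) < t := by positivity
  refine ⟨((s:ℝ) - 1) ^ (1/(t:ℝ)) + t, ?_⟩
  intro V _ _ G _ hfree
  set n := Fintype.card V with hn
  rcases Nat.eq_zero_or_pos n with hn0 | hn1
  · have : IsEmpty V := Fintype.card_eq_zero_iff.mp hn0
    have he : G.edgeFinset = ∅ := Finset.eq_empty_of_isEmpty _
    rw [he, hn0]
    simp only [Finset.card_empty, Nat.cast_zero]
    have hs1 : (0:ℝ) ≤ (s:ℝ) - 1 := by
      have : (1:ℝ) ≤ s := by exact_mod_cast (by omega : 1 ≤ s)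
      linarith
    exact mul_nonneg (add_nonneg (Real.rpow_nonneg hs1 _) (by positivity))
      (Real.rpow_nonneg le_rfl _)
  -- key per-T bound
  have key : ∀ T : Finset V, T.card = t →
      (univ.filter fun v => T ⊆ G.neighborFinset v).card ≤ s - 1 := by
    intro T hT
    by_contra h
    push_neg at h
    have hs' : s ≤ (univ.filter fun v => T ⊆ G.neighborFinset v).card := by omega
    obtain ⟨A, hAsub, hA⟩ := Finset.exists_subset_card_eq hs'
    apply hfree
    refine ⟨A, T, hA, hT, ?_, ?_⟩
    · rw [Finset.disjoint_left]
      intro a ha haT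
      have h2 := hAsub ha
      rw [Finset.mem_filter] at h2
      exact G.irrefl ((SimpleGraph.mem_neighborFinset G a a).1 (h2.2 haT))
    · intro a ha b hb
      have h2 := hAsub ha
      rw [Finset.mem_filter] at h2
      exact (SimpleGraph.mem_neighborFinset G a b).1 (h2.2 hb)
  -- double counting
  have count : ∑ v : V, (G.degree v).choose t ≤ (s-1) * n.choose t := by
    have step : ∀ v : V, (G.degree v).choose t
        = ∑ T ∈ Finset.powersetCard t (univ : Finset V),
            (if T ⊆ G.neighborFinset v then 1 else 0) := by
      intro v
      rw [← SimpleGraph.card_neighborFinset_eq_degree, ← Finset.card_powersetCard t (G.neighborFinset v)]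
      rw [← Finset.sum_filter]
      simp only [Finset.sum_const, smul_eq_mul, mul_one]
      congr 1
      ext T
      simp [Finset.mem_powersetCard, Finset.mem_filter]
      tauto
    calc ∑ v : V, (G.degree v).choose t
        = ∑ T ∈ Finset.powersetCard t (univ : Finset V),
            ∑ v : V, (if T ⊆ G.neighborFinset v then 1 else 0) := by
          rw [Finset.sum_comm]; exact Finset.sum_congr rfl fun v _ => step v
      _ = ∑ T ∈ Finset.powersetCard t (univ : Finset V),
            (univ.filter fun v => T ⊆ G.neighborFinset v).card := by
          refine Finset.sum_congr rfl fun T _ => ?_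
          rw [Finset.card_filter]
      _ ≤ ∑ T ∈ Finset.powersetCard t (univ : Finset V), (s-1) := by
          refine Finset.sum_le_sum fun T hT => ?_
          exact key T (Finset.mem_powersetCard.1 hT).2
      _ = n.choose t * (s-1) := by
          rw [Finset.sum_const, smul_eq_mul, Finset.card_powersetCard, Finset.card_univ]
      _ = (s-1) * n.choose t := mul_comm _ _
  -- to descFactorial and powers
  have natkey : ∑ v : V, (G.degree v - t)^t ≤ (s-1) * n^t := by
    calc ∑ v : V, (G.degree v - t)^t
        ≤ ∑ v : V, (G.degree v).descFactorial t := by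
          refine Finset.sum_le_sum fun v _ => ?_
          calc (G.degree v - t)^t ≤ (G.degree v + 1 - t)^t :=
                Nat.pow_le_pow_left (by omega) t
            _ ≤ (G.degree v).descFactorial t := Nat.pow_sub_le_descFactorial _ t
      _ = t.factorial * ∑ v : V, (G.degree v).choose t := by
          rw [Finset.mul_sum]
          exact Finset.sum_congr rfl fun v _ => Nat.descFactorial_eq_factorial_mul_choose _ _
      _ ≤ t.factorial * ((s-1) * n.choose t) := Nat.mul_le_mul_left _ count
      _ = (s-1) * (t.factorial * n.choose t) := by ring
      _ = (s-1) * n.descFactorial t := by rw [Nat.descFactorial_eq_factorial_mul_choose]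
      _ ≤ (s-1) * n^t := Nat.mul_le_mul_left _ (Nat.descFactorial_le_pow _ _)
  -- real analysis
  set X : ℝ := ∑ v : V, ((G.degree v - t : ℕ) : ℝ) with hX
  have hX0 : 0 ≤ X := Finset.sum_nonneg fun v _ => by positivity
  have hn1R : (1:ℝ) ≤ n := by exact_mod_cast hn1
  have hXt : X ^ t ≤ ((s:ℝ) - 1) * (n:ℝ)^(2*t-1) := by
    have h1 : X ^ t / (n:ℝ)^(t-1) ≤ ∑ v : V, ((G.degree v - t : ℕ) : ℝ)^t := by
      have := pow_sum_div_card_le_sum_pow (s := (univ : Finset V))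
        (f := fun v => ((G.degree v - t : ℕ) : ℝ)) (fun i _ => by positivity) (t-1)
      rw [Nat.sub_add_cancel (by omega : 1 ≤ t)] at this
      simpa [hn] using this
    have h2 : ∑ v : V, ((G.degree v - t : ℕ) : ℝ)^t ≤ ((s:ℝ)-1) * (n:ℝ)^t := by
      have := natkey
      have hc : (((s-1) * n^t : ℕ) : ℝ) = ((s:ℝ)-1) * (n:ℝ)^t := by
        push_cast [Nat.cast_sub (by omega : 1 ≤ s)]
        ring
      calc ∑ v : V, ((G.degree v - t : ℕ) : ℝ)^t
          = ((∑ v : V, (G.degree v - t)^t : ℕ) : ℝ) := by push_cast; ring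
        _ ≤ (((s-1) * n^t : ℕ) : ℝ) := by exact_mod_cast natkey
        _ = ((s:ℝ)-1) * (n:ℝ)^t := hc
    have hpos : (0:ℝ) < (n:ℝ)^(t-1) := by positivity
    rw [div_le_iff₀ hpos] at h1
    calc X ^ t ≤ (∑ v : V, ((G.degree v - t : ℕ) : ℝ)^t) * (n:ℝ)^(t-1) := h1
      _ ≤ (((s:ℝ)-1) * (n:ℝ)^t) * (n:ℝ)^(t-1) := by
          apply mul_le_mul_of_nonneg_right h2 (by positivity)
      _ = ((s:ℝ)-1) * (n:ℝ)^(2*t-1) := by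
          rw [mul_assoc, ← pow_add]
          congr 2
          omega
  have hXle : X ≤ ((s:ℝ)-1)^(1/(t:ℝ)) * (n:ℝ)^(2 - 1/(t:ℝ)) := by
    have hs1 : (0:ℝ) ≤ (s:ℝ) - 1 := by
      have : (1:ℝ) ≤ s := by exact_mod_cast (by omega : 1 ≤ s)
      linarith
    have h3 := Real.rpow_le_rpow (by positivity) hXt (by positivity : (0:ℝ) ≤ 1/(t:ℝ))
    have hL : (X ^ t) ^ (1/(t:ℝ)) = X := by
      rw [← Real.rpow_natCast X t, ← Real.rpow_mul hX0]
      rw [mul_one_div, div_self (ne_of_gt ht0), Real.rpow_one]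
    have hR : (((s:ℝ)-1) * (n:ℝ)^(2*t-1)) ^ (1/(t:ℝ))
        = ((s:ℝ)-1)^(1/(t:ℝ)) * (n:ℝ)^(2 - 1/(t:ℝ)) := by
      rw [Real.mul_rpow hs1 (by positivity)]
      congr 1
      rw [← Real.rpow_natCast (n:ℝ) (2*t-1), ← Real.rpow_mul (by positivity)]
      congr 1
      have : ((2*t-1 : ℕ) : ℝ) = 2*(t:ℝ) - 1 := by
        push_cast [Nat.cast_sub (by omega : 1 ≤ 2*t)]; ring
      rw [this]
      field_simp
    rw [hL, hR] at h3
    exact h3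
  -- conclude
  have degsum : ∑ v : V, G.degree v = 2 * G.edgeFinset.card :=
    SimpleGraph.sum_degrees_eq_twice_card_edges G
  have hE : (G.edgeFinset.card : ℝ) ≤ X + t * n := by
    have h4 : G.edgeFinset.card ≤ (∑ v : V, (G.degree v - t)) + t * n := by
      have : ∑ v : V, G.degree v ≤ (∑ v : V, (G.degree v - t)) + t * n := by
        calc ∑ v : V, G.degree v ≤ ∑ v : V, ((G.degree v - t) + t) :=
              Finset.sum_le_sum fun v _ => by omega
          _ = (∑ v : V, (G.degree v - t)) + t * n := by
              rw [Finset.sum_add_distrib, Finset.sum_const, Finset.card_univ, smul_eq_mul]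
              rw [← hn]
              ring_nf
      omega
    calc (G.edgeFinset.card : ℝ) ≤ (((∑ v : V, (G.degree v - t)) + t * n : ℕ) : ℝ) := by
          exact_mod_cast h4
      _ = X + t * n := by push_cast [hX]; ring
  have htn : (t:ℝ) * n ≤ (t:ℝ) * (n:ℝ)^(2 - 1/(t:ℝ)) := by
    apply mul_le_mul_of_nonneg_left _ (by positivity)
    calc (n:ℝ) = (n:ℝ)^(1:ℝ) := (Real.rpow_one _).symm
      _ ≤ (n:ℝ)^(2 - 1/(t:ℝ)) := by
        apply Real.rpow_le_rpow_of_exponent_le hn1R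
        have : 1/(t:ℝ) ≤ 1 := by
          rw [div_le_one ht0]; exact_mod_cast (by omega : 1 ≤ t)
        linarith
  calc (G.edgeFinset.card : ℝ) ≤ X + t * n := hE
    _ ≤ ((s:ℝ)-1)^(1/(t:ℝ)) * (n:ℝ)^(2 - 1/(t:ℝ)) + (t:ℝ) * (n:ℝ)^(2 - 1/(t:ℝ)) := by
        exact add_le_add hXle htn
    _ = (((s:ℝ) - 1) ^ (1/(t:ℝ)) + t) * (n:ℝ)^(2 - 1/(t:ℝ)) := by ring
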